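/- Let Q be an irreducible n×n generator with stationary row vector π, D* an arbitrary n×n nonnegative cost-rate matrix, and π₀ an initial probability row vector. Then ∫₀ᵗ π₀ exp(Qs) D* 1 ds = π D* 1 · t − π₀ (exp(Qt) − I) D⁻ D* 1, where D⁻ = (1π − Q)⁻¹. -/

import Mathlib

open Matrix MeasureTheory

/-- A generator matrix is irreducible if every state can reach every other state
through transitions of positive rate. -/
def GeneratorIrreducible {n : ℕ} (Q : Matrix (Fin n) (Fin n) ℝ) : Prop :=
  ∀ i j : Fin n, Relation.ReflTransGen (fun a b => 0 < Q a b) i j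

attribute [local instance] Matrix.linftyOpNormedRing Matrix.linftyOpNormedAlgebra

/-- Expected accumulated reward of a Markov reward process: for an irreducible
generator Q with stationary π, nonnegative cost-rate matrix D*, and initial
distribution π₀,
∫₀ᵗ π₀ exp(Qs) D* 1 ds = π D* 1 · t − π₀ (exp(Qt) − I) D⁻ D* 1,
where D⁻ = (1π − Q)⁻¹. -/
theorem expected_accumulated_reward {n : ℕ} (hn : 1 ≤ n)
    (Q : Matrix (Fin n) (Fin n) ℝ)
    (hoff : ∀ i j, i ≠ j → 0 ≤ Q i j)
    (hrow : ∀ i, ∑ j, Q i j = 0)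
    (hirr : GeneratorIrreducible Q)
    (π : Fin n → ℝ)
    (hπpos : ∀ i, 0 ≤ π i) (hπsum : ∑ i, π i = 1)
    (hstat : Matrix.vecMul π Q = 0)
    (Dstar : Matrix (Fin n) (Fin n) ℝ) (hDstar : ∀ i j, 0 ≤ Dstar i j)
    (π₀ : Fin n → ℝ) (hπ₀pos : ∀ i, 0 ≤ π₀ i) (hπ₀sum : ∑ i, π₀ i = 1)
    (OnePi : Matrix (Fin n) (Fin n) ℝ) (hOnePi : OnePi = Matrix.of fun _ j => π j)
    (hunit : IsUnit (OnePi - Q)) :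
    ∀ t : ℝ, 0 ≤ t →
      ∫ s in (0 : ℝ)..t,
          Matrix.vecMul π₀ (NormedSpace.exp (s • Q) * Dstar) ⬝ᵥ (fun _ => 1) =
        (Matrix.vecMul π Dstar ⬝ᵥ (fun _ => 1)) * t -
          Matrix.vecMul π₀ ((NormedSpace.exp (t • Q) - 1) * (OnePi - Q)⁻¹ * Dstar) ⬝ᵥ
            (fun _ => 1) := by
  intro t ht
  set Dm : Matrix (Fin n) (Fin n) ℝ := (OnePi - Q)⁻¹ with hDm
  have hdet : IsUnit (OnePi - Q).det := (Matrix.isUnit_iff_isUnit_det _).mp hunit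
  have hinv : (OnePi - Q) * Dm = 1 := Matrix.mul_nonsing_inv _ hdet
  -- Q * OnePi = 0
  have hQ1 : Q * OnePi = 0 := by
    ext i j
    simp only [hOnePi, Matrix.mul_apply, Matrix.of_apply, Matrix.zero_apply,
      ← Finset.sum_mul, hrow, zero_mul]
  -- exp(s•Q) * OnePi = OnePi
  have hexpOnePi : ∀ s : ℝ, NormedSpace.exp (s • Q) * OnePi = OnePi := by
    have hderiv : ∀ s : ℝ,
        HasDerivAt (fun u : ℝ => NormedSpace.exp (u • Q) * OnePi) 0 s := by
      intro s
      have h := (hasDerivAt_exp_smul_const (𝕂 := ℝ) Q s).mul_const OnePi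
      simp only [mul_assoc, hQ1, mul_zero] at h
      exact h
    intro s
    have hconst := is_const_of_deriv_eq_zero (f := fun u : ℝ =>
        NormedSpace.exp (u • Q) * OnePi)
      (fun x => (hderiv x).differentiableAt) (fun x => (hderiv x).deriv) s 0
    simpa [NormedSpace.exp_zero] using hconst
  -- vecMul facts
  have hπ₀OnePi : Matrix.vecMul π₀ OnePi = π := by
    ext j
    simp [hOnePi, Matrix.vecMul, dotProduct, ← Finset.sum_mul, hπ₀sum]
  have hπOnePi : Matrix.vecMul π OnePi = π := by
    ext j
    simp [hOnePi, Matrix.vecMul, dotProduct, ← Finset.sum_mul, hπsum]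
  have hπsub : Matrix.vecMul π (OnePi - Q) = π := by
    rw [Matrix.vecMul_sub, hstat, hπOnePi, sub_zero]
  have hπDm : Matrix.vecMul π Dm = π := by
    calc Matrix.vecMul π Dm = Matrix.vecMul (Matrix.vecMul π (OnePi - Q)) Dm := by
          rw [hπsub]
      _ = Matrix.vecMul π ((OnePi - Q) * Dm) := Matrix.vecMul_vecMul _ _ _
      _ = π := by rw [hinv, Matrix.vecMul_one]
  have hQDm : Q * Dm = OnePi * Dm - 1 := by
    have : OnePi * Dm - Q * Dm = 1 := by rw [← Matrix.sub_mul, hinv]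
    linear_combination (norm := abel) -this
  set c : ℝ := Matrix.vecMul π Dstar ⬝ᵥ (fun _ => 1) with hc
  -- key derivative identity
  have hkey : ∀ s : ℝ,
      Matrix.vecMul π₀ ((NormedSpace.exp (s • Q) * Q) * (Dm * Dstar)) ⬝ᵥ (fun _ => 1)
        = c - Matrix.vecMul π₀ (NormedSpace.exp (s • Q) * Dstar) ⬝ᵥ (fun _ => 1) := by
    intro s
    have hm : (NormedSpace.exp (s • Q) * Q) * (Dm * Dstar)
        = OnePi * (Dm * Dstar) - NormedSpace.exp (s • Q) * Dstar := by
      calc (NormedSpace.exp (s • Q) * Q) * (Dm * Dstar)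
          = NormedSpace.exp (s • Q) * ((Q * Dm) * Dstar) := by noncomm_ring
        _ = NormedSpace.exp (s • Q) * ((OnePi * Dm - 1) * Dstar) := by rw [hQDm]
        _ = (NormedSpace.exp (s • Q) * OnePi) * (Dm * Dstar)
              - NormedSpace.exp (s • Q) * Dstar := by noncomm_ring
        _ = OnePi * (Dm * Dstar) - NormedSpace.exp (s • Q) * Dstar := by
              rw [hexpOnePi]
    rw [hm, Matrix.vecMul_sub, sub_dotProduct]
    congr 1
    rw [← Matrix.vecMul_vecMul, hπ₀OnePi, ← Matrix.vecMul_vecMul, hπDm]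
  -- the antiderivative
  set F : ℝ → ℝ := fun u => c * u -
    Matrix.vecMul π₀ ((NormedSpace.exp (u • Q) - 1) * (Dm * Dstar)) ⬝ᵥ (fun _ => 1)
    with hF
  -- linear functional M ↦ π₀ (M * (Dm*Dstar)) 1
  let L : Matrix (Fin n) (Fin n) ℝ →ₗ[ℝ] ℝ :=
    { toFun := fun M => Matrix.vecMul π₀ (M * (Dm * Dstar)) ⬝ᵥ (fun _ => 1)
      map_add' := fun M N => by
        simp only [Matrix.add_mul, Matrix.vecMul_add, add_dotProduct]
      map_smul' := fun r M => by
        simp [Matrix.vecMul, dotProduct, Finset.mul_sum,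
          mul_assoc, mul_left_comm, Matrix.smul_mul] }
  have hFderiv : ∀ s : ℝ, HasDerivAt F
      (Matrix.vecMul π₀ (NormedSpace.exp (s • Q) * Dstar) ⬝ᵥ (fun _ => 1)) s := by
    intro s
    have h1 : HasDerivAt (fun u : ℝ => c * u) c s := by
      simpa using (hasDerivAt_id s).const_mul c
    have h2 : HasDerivAt (fun u : ℝ => NormedSpace.exp (u • Q) - 1)
        (NormedSpace.exp (s • Q) * Q) s :=
      (hasDerivAt_exp_smul_const (𝕂 := ℝ) Q s).sub_const 1
    have h3 : HasDerivAt (fun u : ℝ =>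
        L (NormedSpace.exp (u • Q) - 1)) (L (NormedSpace.exp (s • Q) * Q)) s :=
      (L.toContinuousLinearMap.hasFDerivAt.comp_hasDerivAt s h2)
    have h4 := h1.sub h3
    have : c - L (NormedSpace.exp (s • Q) * Q)
        = Matrix.vecMul π₀ (NormedSpace.exp (s • Q) * Dstar) ⬝ᵥ (fun _ => 1) := by
      have := hkey s
      simp only [L, LinearMap.coe_mk, AddHom.coe_mk]
      linarith [hkey s]
    rw [← this]
    exact h4
  have hcont : Continuous fun s : ℝ =>
      Matrix.vecMul π₀ (NormedSpace.exp (s • Q) * Dstar) ⬝ᵥ (fun _ => 1) := by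
    let L2 : Matrix (Fin n) (Fin n) ℝ →ₗ[ℝ] ℝ :=
      { toFun := fun M => Matrix.vecMul π₀ (M * Dstar) ⬝ᵥ (fun _ => 1)
        map_add' := fun M N => by
          simp only [Matrix.add_mul, Matrix.vecMul_add, add_dotProduct]
        map_smul' := fun r M => by
          simp [Matrix.vecMul, dotProduct, Finset.mul_sum,
            mul_assoc, mul_left_comm, Matrix.smul_mul] }
    have : Continuous fun s : ℝ => NormedSpace.exp (s • Q) :=
      NormedSpace.exp_continuous.comp (continuous_id.smul continuous_const)
    exact L2.toContinuousLinearMap.continuous.comp this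
  have hFTC := intervalIntegral.integral_eq_sub_of_hasDerivAt
    (f := F) (a := 0) (b := t)
    (fun s _ => hFderiv s) (hcont.intervalIntegrable 0 t)
  rw [hFTC]
  have hF0 : F 0 = 0 := by
    simp [hF, NormedSpace.exp_zero]
  rw [hF0, sub_zero, hF]
  simp only [← hDm]
  ring_nf
  rw [Matrix.mul_assoc]
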